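/- Let γ ≠ 0 and β be real constants. The function p(y) = γ/(γ²(y+β)² − 1) satisfies the ODE 4·p(y)⁴ − 2·p(y)·p''(y) + 3·(p'(y))² = 0 for all y in any interval where γ²(y+β)² − 1 ≠ 0. -/

import Mathlib

private lemma hasDerivAt_D (gam beta y : ℝ) :
    HasDerivAt (fun y => gam ^ 2 * (y + beta) ^ 2 - 1)
      (gam ^ 2 * (2 * (y + beta))) y := by
  have h : HasDerivAt (fun y : ℝ => y + beta) 1 y :=
    (hasDerivAt_id y).add_const beta
  simpa using ((h.pow 2).const_mul (gam ^ 2)).sub_const 1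

private lemma hasDerivAt_p (gam beta y : ℝ)
    (h : gam ^ 2 * (y + beta) ^ 2 - 1 ≠ 0) :
    HasDerivAt (fun y => gam / (gam ^ 2 * (y + beta) ^ 2 - 1))
      (-(gam * (gam ^ 2 * (2 * (y + beta)))) / (gam ^ 2 * (y + beta) ^ 2 - 1) ^ 2) y := by
  have := (show HasDerivAt (fun y => gam / (gam ^ 2 * (y + beta) ^ 2 - 1)) _ y from
    (hasDerivAt_const y gam).div (hasDerivAt_D gam beta y) h)
  convert this using 1
  ring

private lemma hasDerivAt_q (gam beta y : ℝ)
    (h : gam ^ 2 * (y + beta) ^ 2 - 1 ≠ 0) :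
    HasDerivAt (fun y => -(gam * (gam ^ 2 * (2 * (y + beta)))) / (gam ^ 2 * (y + beta) ^ 2 - 1) ^ 2)
      ((-(gam * (gam ^ 2 * 2)) * (gam ^ 2 * (y + beta) ^ 2 - 1) ^ 2
        - (-(gam * (gam ^ 2 * (2 * (y + beta))))) *
          (2 * (gam ^ 2 * (y + beta) ^ 2 - 1) * (gam ^ 2 * (2 * (y + beta)))))
        / ((gam ^ 2 * (y + beta) ^ 2 - 1) ^ 2) ^ 2) y := by
  have hn : HasDerivAt (fun y : ℝ => -(gam * (gam ^ 2 * (2 * (y + beta)))))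
      (-(gam * (gam ^ 2 * 2))) y := by
    have h1 : HasDerivAt (fun y : ℝ => y + beta) 1 y := (hasDerivAt_id y).add_const beta
    simpa using (show HasDerivAt (fun y : ℝ => -(gam * (gam ^ 2 * (2 * (y + beta))))) _ y from
      (((h1.const_mul 2).const_mul (gam ^ 2)).const_mul gam).neg)
  have hd : HasDerivAt (fun y : ℝ => (gam ^ 2 * (y + beta) ^ 2 - 1) ^ 2)
      (2 * (gam ^ 2 * (y + beta) ^ 2 - 1) * (gam ^ 2 * (2 * (y + beta)))) y := by
    simpa [mul_comm, mul_assoc, mul_left_comm] using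
      (show HasDerivAt (fun y : ℝ => (gam ^ 2 * (y + beta) ^ 2 - 1) ^ 2) _ y from
        (hasDerivAt_D gam beta y).pow 2)
  exact hn.div hd (pow_ne_zero 2 h)

theorem stmt_4 (gam beta : ℝ) (hgam : gam ≠ 0) :
    ∀ y : ℝ, gam ^ 2 * (y + beta) ^ 2 - 1 ≠ 0 →
      4 * ((fun y => gam / (gam ^ 2 * (y + beta) ^ 2 - 1)) y) ^ 4
      - 2 * (fun y => gam / (gam ^ 2 * (y + beta) ^ 2 - 1)) y
          * deriv (deriv (fun y => gam / (gam ^ 2 * (y + beta) ^ 2 - 1))) y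
      + 3 * (deriv (fun y => gam / (gam ^ 2 * (y + beta) ^ 2 - 1)) y) ^ 2 = 0 := by
  intro y hD
  have hc : Continuous (fun y : ℝ => gam ^ 2 * (y + beta) ^ 2 - 1) := by fun_prop
  have hopen : IsOpen {y : ℝ | gam ^ 2 * (y + beta) ^ 2 - 1 ≠ 0} :=
    isOpen_compl_singleton.preimage hc
  have hnhds : {y : ℝ | gam ^ 2 * (y + beta) ^ 2 - 1 ≠ 0} ∈ nhds y :=
    hopen.mem_nhds hD
  have hEq : deriv (fun y => gam / (gam ^ 2 * (y + beta) ^ 2 - 1)) =ᶠ[nhds y]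
      (fun y => -(gam * (gam ^ 2 * (2 * (y + beta)))) / (gam ^ 2 * (y + beta) ^ 2 - 1) ^ 2) := by
    filter_upwards [hnhds] with z hz
    exact (hasDerivAt_p gam beta z hz).deriv
  have h1 : deriv (fun y => gam / (gam ^ 2 * (y + beta) ^ 2 - 1)) y =
      -(gam * (gam ^ 2 * (2 * (y + beta)))) / (gam ^ 2 * (y + beta) ^ 2 - 1) ^ 2 :=
    (hasDerivAt_p gam beta y hD).deriv
  have h2 : deriv (deriv (fun y => gam / (gam ^ 2 * (y + beta) ^ 2 - 1))) y =
      (-(gam * (gam ^ 2 * 2)) * (gam ^ 2 * (y + beta) ^ 2 - 1) ^ 2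
        - (-(gam * (gam ^ 2 * (2 * (y + beta))))) *
          (2 * (gam ^ 2 * (y + beta) ^ 2 - 1) * (gam ^ 2 * (2 * (y + beta)))))
        / ((gam ^ 2 * (y + beta) ^ 2 - 1) ^ 2) ^ 2 := by
    rw [hEq.deriv_eq]
    exact (hasDerivAt_q gam beta y hD).deriv
  simp only [h1, h2]
  field_simp
  ring
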